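/- Let I be an SMC instance with symmetric valuations (U = V) taking values in {0,1,α} for some α > 1, and let μ* be an optimal stable fractional matching for I. Then every integral matching appearing with positive weight in a Birkhoff–von Neumann support of μ* is itself a stable integral matching, and consequently there exists a stable integral matching μ with W(μ) = W(μ*). -/

import Mathlib

open Finset

/-- A fractional matching: nonnegative weights with row and column sums at most 1. -/
def IsFrac {n : ℕ} (μ : Fin n → Fin n → ℝ) : Prop :=
  (∀ m w, 0 ≤ μ m w) ∧ (∀ m, ∑ w, μ m w ≤ 1) ∧ (∀ w, ∑ m, μ m w ≤ 1)

/-- An integral matching takes values in {0,1}. -/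
def IsIntegralM {n : ℕ} (μ : Fin n → Fin n → ℝ) : Prop :=
  ∀ m w, μ m w = 0 ∨ μ m w = 1

/-- A complete (perfect) matching: all row and column sums equal 1. -/
def IsPerfect {n : ℕ} (μ : Fin n → Fin n → ℝ) : Prop :=
  (∀ m, ∑ w, μ m w = 1) ∧ (∀ w, ∑ m, μ m w = 1)

/-- Utility of man `m` under matching `μ`. -/
def uM {n : ℕ} (U μ : Fin n → Fin n → ℝ) (m : Fin n) : ℝ := ∑ w, U m w * μ m w

/-- Utility of woman `w` under matching `μ`. -/
def vW {n : ℕ} (V μ : Fin n → Fin n → ℝ) (w : Fin n) : ℝ := ∑ m, V m w * μ m w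

/-- Stability: no blocking pair. -/
def IsStable {n : ℕ} (U V μ : Fin n → Fin n → ℝ) : Prop :=
  ∀ m w, U m w ≤ uM U μ m ∨ V m w ≤ vW V μ w

/-- Social welfare. -/
def welfare {n : ℕ} (U V μ : Fin n → Fin n → ℝ) : ℝ :=
  (∑ m, uM U μ m) + (∑ w, vW V μ w)

lemma row_partner {n : ℕ} (ν : Fin n → Fin n → ℝ) (hint : ∀ m w, ν m w = 0 ∨ ν m w = 1)
    (hrow : ∀ m, ∑ w, ν m w = 1) (m : Fin n) :
    ∃ w, ν m w = 1 ∧ ∀ x, x ≠ w → ν m x = 0 := by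
  have h1 : ∃ w, ν m w ≠ 0 := by
    by_contra h
    push_neg at h
    have := hrow m
    rw [Finset.sum_eq_zero (fun x _ => h x)] at this
    norm_num at this
  obtain ⟨w, hw⟩ := h1
  have hw1 : ν m w = 1 := (hint m w).resolve_left hw
  refine ⟨w, hw1, fun x hx => ?_⟩
  have hsum : ∑ b ∈ univ.erase w, ν m b = 0 := by
    have := Finset.add_sum_erase univ (ν m) (mem_univ w)
    rw [hrow m] at this
    linarith [hw1, this]
  have hnn : ∀ b ∈ univ.erase w, 0 ≤ ν m b := fun b _ => by
    rcases hint m b with h | h <;> simp [h]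
  exact (Finset.sum_eq_zero_iff_of_nonneg hnn).1 hsum x (by simp [hx])

set_option maxHeartbeats 2000000 in
lemma key {n : ℕ} (U V : Fin n → Fin n → ℝ) (α : ℝ) (hα : 1 < α)
    (hsym : ∀ m w, U m w = V m w)
    (hter : ∀ m w, U m w = 0 ∨ U m w = 1 ∨ U m w = α)
    (μs : Fin n → Fin n → ℝ) (hnn : ∀ m w, 0 ≤ μs m w) (hperf : IsPerfect μs)
    (hstab : IsStable U V μs)
    (hopt : ∀ μ', IsFrac μ' → IsStable U V μ' → welfare U V μ' ≤ welfare U V μs)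
    (ν : Fin n → Fin n → ℝ) (hint : IsIntegralM ν) (hp : IsPerfect ν)
    (lam : ℝ) (hlam : 0 < lam) (hle : ∀ a b, lam * ν a b ≤ μs a b) :
    IsStable U V ν := by
  have hU0 : ∀ a b, 0 ≤ U a b := fun a b => by rcases hter a b with h | h | h <;> rw [h] <;> linarith
  have hUα : ∀ a b, U a b ≤ α := fun a b => by rcases hter a b with h | h | h <;> rw [h] <;> linarith
  intro m w
  by_contra hblock
  push_neg at hblock
  obtain ⟨h1, h2⟩ := hblock
  -- partners
  obtain ⟨w', hw'1, hw'0⟩ := row_partner ν hint hp.1 m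
  obtain ⟨m', hm'1, hm'0⟩ := row_partner (fun b a => ν a b) (fun b a => hint a b) hp.2 w
  have huM : uM U ν m = U m w' := by
    rw [uM, Finset.sum_eq_single w']
    · rw [hw'1, mul_one]
    · intro b _ hb; rw [hw'0 b hb, mul_zero]
    · intro h; exact absurd (mem_univ w') h
  have hvW : vW V ν w = V m' w := by
    rw [vW, Finset.sum_eq_single m']
    · rw [hm'1, mul_one]
    · intro a _ ha; rw [hm'0 a ha, mul_zero]
    · intro h; exact absurd (mem_univ m') h
  rw [huM] at h1
  rw [hvW, ← hsym, ← hsym] at h2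
  -- so U m w' < U m w and U m' w < U m w
  have hww' : w ≠ w' := fun h => by rw [← h] at h1; exact lt_irrefl _ h1
  have hmm' : m ≠ m' := fun h => by
    rw [← h] at hm'1
    have := hw'0 w (hww')
    rw [this] at hm'1; norm_num at hm'1
  rcases hter m w with h0 | hone | halpha
  · rw [h0] at h1; exact absurd h1 (not_lt.2 (hU0 m w'))
  · -- case U m w = 1 : swap argument
    have hUmw' : U m w' = 0 := by
      rcases hter m w' with h | h | h
      · exact h
      · rw [hone] at h1; rw [h] at h1; exact absurd h1 (lt_irrefl _)
      · rw [hone] at h1; rw [h] at h1; linarith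
    have hUm'w : U m' w = 0 := by
      rcases hter m' w with h | h | h
      · exact h
      · rw [hone] at h2; rw [h] at h2; exact absurd h2 (lt_irrefl _)
      · rw [hone] at h2; rw [h] at h2; linarith
    -- the swap matching
    set D : Fin n → Fin n → ℝ := fun a b =>
      (if a = m then (if b = w then (1:ℝ) else 0) - (if b = w' then 1 else 0) else 0) +
      (if a = m' then (if b = w' then (1:ℝ) else 0) - (if b = w then 1 else 0) else 0) with hD
    set μ' : Fin n → Fin n → ℝ := fun a b => μs a b + lam * D a b with hμ'
    have hmw'1 : lam ≤ μs m w' := by have := hle m w'; rwa [hw'1, mul_one] at this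
    have hm'w1 : lam ≤ μs m' w := by have := hle m' w; rwa [hm'1, mul_one] at this
    have hfrac : IsFrac μ' := by
      refine ⟨?_, ?_, ?_⟩
      · intro a b
        by_cases ham : a = m <;> by_cases ham' : a = m' <;> by_cases hbw : b = w <;>
          by_cases hbw' : b = w' <;>
          simp only [hμ', hD, ham, ham', hbw, hbw', if_pos, if_neg, if_true] <;>
          simp_all <;> linarith [hnn a b, hnn m w, hnn m w', hnn m' w, hnn m' w', hlam, hmw'1, hm'w1]
      · intro a
        have : ∑ b, D a b = 0 := by
          simp [hD, Finset.sum_add_distrib, Finset.sum_sub_distrib, Finset.sum_ite_eq',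
            apply_ite (fun s : ℝ => s)]
        simp only [hμ', Finset.sum_add_distrib, ← Finset.mul_sum, this, mul_zero, add_zero]
        rw [hperf.1 a]
      · intro b
        have : ∑ a, D a b = 0 := by
          simp only [hD, Finset.sum_add_distrib]
          rw [Finset.sum_ite_eq' univ m, Finset.sum_ite_eq' univ m']
          simp
        simp only [hμ', Finset.sum_add_distrib, ← Finset.mul_sum, this, mul_zero, add_zero]
        rw [hperf.2 b]
    -- utility changes
    have huMch : ∀ a, uM U μ' a = uM U μs a +
        lam * ((if a = m then U m w - U m w' else 0) + (if a = m' then U m' w' - U m' w else 0)) := by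
      intro a
      have hterm : ∀ b, U a b * μ' a b = U a b * μs a b + lam * (U a b * D a b) := by
        intro b; simp only [hμ']; ring
      simp only [uM, hterm, Finset.sum_add_distrib, ← Finset.mul_sum]
      congr 2
      by_cases ham : a = m <;> by_cases ham' : a = m'
      · exact absurd (ham ▸ ham') hmm'
      · simp [hD, ham, ham', hmm', Ne.symm hmm', mul_ite, mul_sub, mul_add,
          Finset.sum_sub_distrib, Finset.sum_add_distrib, Finset.sum_ite_eq']
      · simp [hD, ham, ham', hmm', Ne.symm hmm', mul_ite, mul_sub, mul_add,
          Finset.sum_sub_distrib, Finset.sum_add_distrib, Finset.sum_ite_eq']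
      · simp [hD, ham, ham']
    have hvWch : ∀ b, vW V μ' b = vW V μs b +
        lam * ((if b = w then V m w - V m' w else 0) + (if b = w' then V m' w' - V m w' else 0)) := by
      intro b
      have hterm : ∀ a, V a b * μ' a b = V a b * μs a b + lam * (V a b * D a b) := by
        intro a; simp only [hμ']; ring
      simp only [vW, hterm, Finset.sum_add_distrib, ← Finset.mul_sum]
      congr 2
      by_cases hbw : b = w <;> by_cases hbw' : b = w'
      · exact absurd (hbw ▸ hbw') hww'
      · simp [hD, hbw, hbw', mul_ite, mul_sub, mul_add, Finset.sum_sub_distrib,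
          Finset.sum_add_distrib, Finset.sum_ite_eq', hmm', hww', Ne.symm hmm',
          Ne.symm hww'] <;> ring
      · simp [hD, hbw, hbw', mul_ite, mul_sub, mul_add, Finset.sum_sub_distrib,
          Finset.sum_add_distrib, Finset.sum_ite_eq', hmm', hww', Ne.symm hmm',
          Ne.symm hww'] <;> ring
      · simp [hD, hbw, hbw', mul_ite, mul_sub, mul_add, Finset.sum_sub_distrib,
          Finset.sum_add_distrib, Finset.sum_ite_eq', hmm', hww', Ne.symm hmm',
          Ne.symm hww'] <;> ring
    have hUm'w'0 : 0 ≤ U m' w' := hU0 m' w'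
    have huMle : ∀ a, uM U μs a ≤ uM U μ' a := by
      intro a
      rw [huMch a]
      have : 0 ≤ (if a = m then U m w - U m w' else 0) + (if a = m' then U m' w' - U m' w else 0) := by
        split_ifs <;> simp_all <;> linarith
      nlinarith
    have hvWle : ∀ b, vW V μs b ≤ vW V μ' b := by
      intro b
      rw [hvWch b]
      have : 0 ≤ (if b = w then V m w - V m' w else 0) + (if b = w' then V m' w' - V m w' else 0) := by
        split_ifs <;> simp_all [← hsym] <;> linarith
      nlinarith
    have hstab' : IsStable U V μ' := by
      intro a b
      rcases hstab a b with h | h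
      · exact Or.inl (h.trans (huMle a))
      · exact Or.inr (h.trans (hvWle b))
    have hwelf : welfare U V μs < welfare U V μ' := by
      have e1 : ∑ a, uM U μ' a = (∑ a, uM U μs a) + lam * ((U m w - U m w') + (U m' w' - U m' w)) := by
        simp only [huMch, Finset.sum_add_distrib, ← Finset.mul_sum, Finset.sum_add_distrib,
          Finset.sum_ite_eq', mem_univ, if_true]
      have e2 : ∑ b, vW V μ' b = (∑ b, vW V μs b) + lam * ((V m w - V m' w) + (V m' w' - V m w')) := by
        simp only [hvWch, Finset.sum_add_distrib, ← Finset.mul_sum, Finset.sum_add_distrib,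
          Finset.sum_ite_eq', mem_univ, if_true]
      have hv1 : V m w = 1 := (hsym m w) ▸ hone
      have hv2 : V m w' = 0 := (hsym m w') ▸ hUmw'
      have hv3 : V m' w = 0 := (hsym m' w) ▸ hUm'w
      have hv4 : 0 ≤ V m' w' := (hsym m' w') ▸ hUm'w'0
      rw [welfare, welfare, e1, e2]
      rw [hone, hUmw', hUm'w, hv1, hv2, hv3]
      nlinarith
    exact absurd (hopt μ' hfrac hstab') (not_le.2 hwelf)
  · -- case U m w = α : contradiction with stability of μs
    have hUmw' : U m w' ≤ 1 := by
      rcases hter m w' with h | h | h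
      · rw [h]; linarith
      · rw [h]
      · rw [halpha] at h1; rw [h] at h1; exact absurd h1 (lt_irrefl _)
    have hUm'w : U m' w ≤ 1 := by
      rcases hter m' w with h | h | h
      · rw [h]; linarith
      · rw [h]
      · rw [halpha] at h2; rw [h] at h2; exact absurd h2 (lt_irrefl _)
    have hmw'1 : lam ≤ μs m w' := by have := hle m w'; rwa [hw'1, mul_one] at this
    have hm'w1 : lam ≤ μs m' w := by have := hle m' w; rwa [hm'1, mul_one] at this
    have hrowbound : uM U μs m < α := by
      have hadd := Finset.add_sum_erase univ (fun b => U m b * μs m b) (mem_univ w')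
      have hrest : ∑ b ∈ univ.erase w', U m b * μs m b ≤ α * ∑ b ∈ univ.erase w', μs m b := by
        rw [Finset.mul_sum]
        exact Finset.sum_le_sum fun b _ => mul_le_mul_of_nonneg_right (hUα m b) (hnn m b)
      have hsum' : ∑ b ∈ univ.erase w', μs m b = 1 - μs m w' := by
        have h := Finset.add_sum_erase univ (μs m) (mem_univ w')
        rw [hperf.1 m] at h; linarith
      have huMeq : uM U μs m = ∑ b, U m b * μs m b := rfl
      rw [hsum'] at hrest
      nlinarith [hnn m w']
    have hcolbound : vW V μs w < α := by
      have hadd := Finset.add_sum_erase univ (fun a => V a w * μs a w) (mem_univ m')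
      have hrest : ∑ a ∈ univ.erase m', V a w * μs a w ≤ α * ∑ a ∈ univ.erase m', μs a w := by
        rw [Finset.mul_sum]
        refine Finset.sum_le_sum fun a _ => mul_le_mul_of_nonneg_right ?_ (hnn a w)
        rw [← hsym]; exact hUα a w
      have hsum' : ∑ a ∈ univ.erase m', μs a w = 1 - μs m' w := by
        have h := Finset.add_sum_erase univ (fun a => μs a w) (mem_univ m')
        rw [hperf.2 w] at h; linarith
      have hvWeq : vW V μs w = ∑ a, V a w * μs a w := rfl
      have hVm'w : V m' w ≤ 1 := by rw [← hsym]; exact hUm'w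
      rw [hsum'] at hrest
      nlinarith [hnn m' w]
    rcases hstab m w with h | h
    · rw [halpha] at h; linarith
    · rw [← hsym, halpha] at h; linarith

lemma sum_decomp {n : ℕ} {ι : Type*} [Fintype ι] (w : ι → ℝ) (ν : ι → Fin n → Fin n → ℝ)
    (μ : Fin n → Fin n → ℝ) (h : ∀ a b, μ a b = ∑ j, w j * ν j a b)
    (f : Fin n → Fin n → ℝ) :
    ∑ a, ∑ b, f a b * μ a b = ∑ j, w j * ∑ a, ∑ b, f a b * ν j a b := by
  calc ∑ a, ∑ b, f a b * μ a b = ∑ a, ∑ b, ∑ j, w j * (f a b * ν j a b) := by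
        refine Finset.sum_congr rfl fun a _ => Finset.sum_congr rfl fun b _ => ?_
        rw [h, Finset.mul_sum]
        exact Finset.sum_congr rfl fun j _ => by ring
    _ = ∑ a, ∑ j, ∑ b, w j * (f a b * ν j a b) :=
        Finset.sum_congr rfl fun a _ => Finset.sum_comm
    _ = ∑ j, ∑ a, ∑ b, w j * (f a b * ν j a b) := Finset.sum_comm
    _ = ∑ j, w j * ∑ a, ∑ b, f a b * ν j a b := by
        refine Finset.sum_congr rfl fun j _ => ?_
        rw [Finset.mul_sum]
        exact Finset.sum_congr rfl fun a _ => by rw [Finset.mul_sum]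

lemma welfare_decomp {n : ℕ} (U V : Fin n → Fin n → ℝ) {ι : Type*} [Fintype ι]
    (w : ι → ℝ) (ν : ι → Fin n → Fin n → ℝ) (μ : Fin n → Fin n → ℝ)
    (h : ∀ a b, μ a b = ∑ j, w j * ν j a b) :
    welfare U V μ = ∑ j, w j * welfare U V (ν j) := by
  have h1 := sum_decomp w ν μ h U
  have h2 := sum_decomp (n := n) w (fun j b a => ν j a b) (fun b a => μ a b)
    (fun a b => h b a) (fun a b => V b a)
  simp only [welfare, uM, vW]
  rw [h1, h2, ← Finset.sum_add_distrib]
  exact Finset.sum_congr rfl fun j _ => by ring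


theorem stmt2 {n : ℕ} (U V : Fin n → Fin n → ℝ) (α : ℝ) (hα : 1 < α)
    (hsym : ∀ m w, U m w = V m w)
    (hter : ∀ m w, U m w = 0 ∨ U m w = 1 ∨ U m w = α)
    (μs : Fin n → Fin n → ℝ) (hnn : ∀ m w, 0 ≤ μs m w) (hperf : IsPerfect μs)
    (hstab : IsStable U V μs)
    (hopt : ∀ μ', IsFrac μ' → IsStable U V μ' → welfare U V μ' ≤ welfare U V μs) :
    (∀ (k : ℕ) (lam : Fin k → ℝ) (ν : Fin k → Fin n → Fin n → ℝ),
        (∀ j, 0 < lam j) → (∑ j, lam j = 1) →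
        (∀ j, IsIntegralM (ν j) ∧ IsPerfect (ν j)) →
        (∀ m w, μs m w = ∑ j, lam j * ν j m w) →
        ∀ j, IsStable U V (ν j)) ∧
    ∃ μ : Fin n → Fin n → ℝ, IsIntegralM μ ∧ IsPerfect μ ∧ IsStable U V μ ∧
      welfare U V μ = welfare U V μs := by
  constructor
  · intro k lam ν hpos hsum hip hdec j
    refine key U V α hα hsym hter μs hnn hperf hstab hopt (ν j) (hip j).1 (hip j).2
      (lam j) (hpos j) ?_
    intro a b
    rw [hdec a b]
    refine Finset.single_le_sum (f := fun j' => lam j' * ν j' a b) (fun i _ => ?_) (mem_univ j)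
    exact mul_nonneg (hpos i).le (by rcases (hip i).1 a b with h | h <;> simp [h])
  · have hDS : Matrix.of μs ∈ doublyStochastic ℝ (Fin n) := by
      rw [mem_doublyStochastic_iff_sum]
      exact ⟨hnn, hperf.1, hperf.2⟩
    obtain ⟨wt, hw0, hw1, hw2⟩ := exists_eq_sum_perm_of_mem_doublyStochastic hDS
    set ν : Equiv.Perm (Fin n) → Fin n → Fin n → ℝ :=
      fun σ a b => if σ a = b then 1 else 0 with hν
    have hent : ∀ (σ : Equiv.Perm (Fin n)) a b, (σ.permMatrix ℝ) a b = ν σ a b := by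
      intro σ a b
      simp [Equiv.Perm.permMatrix, PEquiv.toMatrix_apply, Equiv.toPEquiv_apply, hν,
        Option.mem_def, eq_comm]
    have hdec : ∀ a b, μs a b = ∑ σ, wt σ * ν σ a b := by
      intro a b
      have h := congrFun (congrFun hw2 a) b
      simp only [Finset.sum_apply, Matrix.sum_apply, Matrix.smul_apply, smul_eq_mul,
        Matrix.of_apply, hent] at h
      exact h.symm
    have hint : ∀ σ, IsIntegralM (ν σ) := fun σ a b => by
      by_cases h : σ a = b <;> simp [hν, h]
    have hperfν : ∀ σ, IsPerfect (ν σ) := by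
      intro σ
      constructor
      · intro a; simp [hν]
      · intro b; simp [hν, Equiv.apply_eq_iff_eq_symm_apply]
    have hfracν : ∀ σ, IsFrac (ν σ) := fun σ =>
      ⟨fun a b => by rcases hint σ a b with h | h <;> simp [h],
       fun a => le_of_eq ((hperfν σ).1 a), fun b => le_of_eq ((hperfν σ).2 b)⟩
    have hstabν : ∀ σ, 0 < wt σ → IsStable U V (ν σ) := by
      intro σ hσ
      refine key U V α hα hsym hter μs hnn hperf hstab hopt (ν σ) (hint σ) (hperfν σ)
        (wt σ) hσ ?_
      intro a b
      rw [hdec a b]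
      refine Finset.single_le_sum (f := fun σ' => wt σ' * ν σ' a b) (fun i _ => ?_) (mem_univ σ)
      exact mul_nonneg (hw0 i) (by rcases hint i a b with h | h <;> simp [h])
    have hex : ∃ σ, 0 < wt σ := by
      by_contra hcon
      push_neg at hcon
      have h0 : ∑ σ, wt σ = 0 := Finset.sum_eq_zero fun σ _ => le_antisymm (hcon σ) (hw0 σ)
      rw [hw1] at h0
      norm_num at h0
    obtain ⟨σ0, hσ0⟩ := hex
    have hwd := welfare_decomp U V wt ν μs hdec
    have hle : ∀ σ, wt σ * welfare U V (ν σ) ≤ wt σ * welfare U V μs := by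
      intro σ
      rcases eq_or_lt_of_le (hw0 σ) with h | h
      · rw [← h]; simp
      · exact mul_le_mul_of_nonneg_left (hopt (ν σ) (hfracν σ) (hstabν σ h)) h.le
    refine ⟨ν σ0, hint σ0, hperfν σ0, hstabν σ0 hσ0, ?_⟩
    by_contra hne
    have hlt : welfare U V (ν σ0) < welfare U V μs :=
      lt_of_le_of_ne (hopt (ν σ0) (hfracν σ0) (hstabν σ0 hσ0)) hne
    have hsum : ∑ σ, wt σ * welfare U V (ν σ) < ∑ σ, wt σ * welfare U V μs :=
      Finset.sum_lt_sum (fun σ _ => hle σ)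
        ⟨σ0, mem_univ σ0, mul_lt_mul_of_pos_left hlt hσ0⟩
    rw [← hwd, ← Finset.sum_mul, hw1, one_mul] at hsum
    exact lt_irrefl _ hsum
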